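/- Let N ≥ 2, 2ℓ ∈ ℤ≥0, and define, for spin parameter s ∈ ℂ, the transfer matrix T^{(s)}(λ) acting on functions f : ℂ^N → ℂ by (T^{(s)}(λ)f) = ∑_{(i₁,…,i_N)∈{1,2}^N} L^{(1)}_{i₁i₂}(λ;s)·L^{(2)}_{i₂i₃}(λ;s)⋯L^{(N)}_{i_Ni₁}(λ;s) f, where L^{(n)}_{ij}(λ;s) is the entry L_{ij}(λ) of the elliptic L-operator with spin s acting in the variable z_n (operators in distinct variables commute). Let Φ(z₁,…,z_N) = ∏_{i=1}^{N} φ_ℓ(z_i, z_{i+1}) with indices mod N (z_{N+1} = z₁). Then for every f and all points where both sides are defined: T^{(ℓ)}(λ)(Φ·f) = Φ·(T^{(−ℓ−1)}(λ)f); i.e. multiplication by Φ intertwines the spin-(−ℓ−1) and spin-ℓ transfer matrices. -/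

import Mathlib

/-- Jacobi theta function `θ_a(z|τ)` for `a = 1,2,3,4`. -/
noncomputable def jTheta (a : ℕ) (z τ : ℂ) : ℂ :=
  match a with
  | 1 => -∑' k : ℤ, Complex.exp ((Real.pi : ℂ) * Complex.I * τ * ((k : ℂ) + 1/2)^2
          + 2 * (Real.pi : ℂ) * Complex.I * (z + 1/2) * ((k : ℂ) + 1/2))
  | 2 => ∑' k : ℤ, Complex.exp ((Real.pi : ℂ) * Complex.I * τ * ((k : ℂ) + 1/2)^2
          + 2 * (Real.pi : ℂ) * Complex.I * z * ((k : ℂ) + 1/2))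
  | 3 => ∑' k : ℤ, Complex.exp ((Real.pi : ℂ) * Complex.I * τ * (k : ℂ)^2
          + 2 * (Real.pi : ℂ) * Complex.I * z * (k : ℂ))
  | 4 => ∑' k : ℤ, Complex.exp ((Real.pi : ℂ) * Complex.I * τ * (k : ℂ)^2
          + 2 * (Real.pi : ℂ) * Complex.I * (z + 1/2) * (k : ℂ))
  | _ => 0

/-- Cyclic successor on `Fin N` (so `z_{N+1} = z₁`). -/
def cyc {N : ℕ} (n : Fin N) : Fin N := ⟨(n.1 + 1) % N, Nat.mod_lt _ n.pos⟩

/-- The Sklyanin operator `s_a^{(s)}` acting in the variable `z_n` of a function of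
`N` complex variables. -/
noncomputable def sOpN (τ η s : ℂ) (N : ℕ) (n : Fin N) (a : ℕ)
    (f : (Fin N → ℂ) → ℂ) (z : Fin N → ℂ) : ℂ :=
  (jTheta (a+1) (2 * z n - 2*s*η) τ * f (Function.update z n (z n + η))
    - jTheta (a+1) (-(2 * z n) - 2*s*η) τ * f (Function.update z n (z n - η))) /
    jTheta 1 (2 * z n) τ

/-- Entry `L^{(n)}_{ij}(λ; s)` of the elliptic L-operator with spin `s` acting in the
variable `z_n`. -/
noncomputable def LOpN (τ η s lam : ℂ) (N : ℕ) (n : Fin N) (i j : Fin 2)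
    (f : (Fin N → ℂ) → ℂ) (z : Fin N → ℂ) : ℂ :=
  if i = 0 then
    if j = 0 then
      (1/2) * (jTheta 1 (2*lam) τ * sOpN τ η s N n 0 f z
        + jTheta 4 (2*lam) τ * sOpN τ η s N n 3 f z)
    else
      (1/2) * (jTheta 2 (2*lam) τ * sOpN τ η s N n 1 f z
        + jTheta 3 (2*lam) τ * sOpN τ η s N n 2 f z)
  else
    if j = 0 then
      (1/2) * (jTheta 2 (2*lam) τ * sOpN τ η s N n 1 f z
        - jTheta 3 (2*lam) τ * sOpN τ η s N n 2 f z)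
    else
      (1/2) * (jTheta 1 (2*lam) τ * sOpN τ η s N n 0 f z
        - jTheta 4 (2*lam) τ * sOpN τ η s N n 3 f z)

/-- The transfer matrix `T^{(s)}(λ)` of the homogeneous `N`-site chain:
`(T^{(s)}(λ)f) = ∑_{i : Fin N → Fin 2} L^{(1)}_{i₁i₂}(λ;s)·L^{(2)}_{i₂i₃}(λ;s) ⋯
L^{(N)}_{i_N i₁}(λ;s) f` (indices cyclic). -/
noncomputable def transfer (τ η s lam : ℂ) (N : ℕ)
    (f : (Fin N → ℂ) → ℂ) (z : Fin N → ℂ) : ℂ :=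
  ∑ i : Fin N → Fin 2,
    ((List.ofFn (fun n : Fin N =>
        (LOpN τ η s lam N n (i n) (i (cyc n)) :
          ((Fin N → ℂ) → ℂ) → ((Fin N → ℂ) → ℂ)))).foldr (fun op g => op g) f) z

/-- `Φ_ℓ(z) = ∏_{j=0}^{2ℓ} θ₁(z + 2(j−ℓ)η|τ)`, written with `n2ℓ = 2ℓ ∈ ℤ≥0`. -/
noncomputable def PhiFun (τ η : ℂ) (n : ℕ) (z : ℂ) : ℂ :=
  ∏ j ∈ Finset.range (n+1), jTheta 1 (z + (2*(j : ℂ) - (n : ℂ))*η) τ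

/-- `φ_ℓ(z₁,z₂) = Φ_ℓ(z₁−z₂)·Φ_ℓ(z₁+z₂)`. -/
noncomputable def phiFun (τ η : ℂ) (n : ℕ) (z₁ z₂ : ℂ) : ℂ :=
  PhiFun τ η n (z₁ - z₂) * PhiFun τ η n (z₁ + z₂)

open Complex

noncomputable section

/-- General theta-type term. -/
def tterm (c w T : ℂ) (k : ℤ) : ℂ :=
  Complex.exp ((Real.pi : ℂ) * Complex.I * T * ((k : ℂ) + c)^2
      + 2 * (Real.pi : ℂ) * Complex.I * w * ((k : ℂ) + c))

lemma tterm_eq (c w T : ℂ) (k : ℤ) :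
    tterm c w T k = Complex.exp ((Real.pi : ℂ) * Complex.I * T * c^2
        + 2 * (Real.pi : ℂ) * Complex.I * w * c) * jacobiTheta₂_term k (w + c*T) T := by
  rw [tterm, jacobiTheta₂_term, ← Complex.exp_add]
  congr 1
  ring

lemma summable_norm_jt2term {z T : ℂ} (hT : 0 < T.im) :
    Summable fun k : ℤ => ‖jacobiTheta₂_term k z T‖ := by
  have hb := summable_pow_mul_jacobiTheta₂_term_bound (|z.im|) hT 0
  refine Summable.of_nonneg_of_le (fun k => norm_nonneg _) (fun k => ?_) hb
  rw [norm_jacobiTheta₂_term, pow_zero, one_mul, Int.cast_abs]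
  apply Real.exp_le_exp.mpr
  have h1 : -(2:ℝ) * Real.pi * k * z.im ≤ Real.pi * (2 * |z.im| * |(k:ℝ)|) := by
    have h2 : -(2:ℝ) * Real.pi * k * z.im ≤ |(-(2:ℝ)) * Real.pi * k * z.im| := le_abs_self _
    refine h2.trans ?_
    rw [abs_mul, abs_mul, abs_mul, abs_neg]
    have h3 : |(2:ℝ)| = 2 := by norm_num
    rw [h3, _root_.abs_of_nonneg Real.pi_pos.le]
    nlinarith [abs_nonneg (k:ℝ), abs_nonneg z.im, Real.pi_pos]
  nlinarith [Real.pi_pos]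

lemma summable_norm_tterm {c w T : ℂ} (hT : 0 < T.im) :
    Summable fun k : ℤ => ‖tterm c w T k‖ := by
  simp only [tterm_eq, norm_mul]
  exact (summable_norm_jt2term hT).mul_left _

lemma summable_tterm {c w T : ℂ} (hT : 0 < T.im) : Summable (tterm c w T) :=
  (summable_norm_tterm hT).of_norm

lemma jTheta_one_eq (z T : ℂ) : jTheta 1 z T = -∑' k : ℤ, tterm (1/2) (z + 1/2) T k := rfl

lemma jTheta_two_eq (z T : ℂ) : jTheta 2 z T = ∑' k : ℤ, tterm (1/2) z T k := rfl

lemma jTheta_three_eq (z T : ℂ) : jTheta 3 z T = ∑' k : ℤ, tterm 0 z T k := by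
  rw [jTheta]
  refine tsum_congr fun k => ?_
  rw [tterm]
  congr 1
  ring

lemma jTheta_four_eq (z T : ℂ) : jTheta 4 z T = ∑' k : ℤ, tterm 0 (z + 1/2) T k := by
  rw [jTheta]
  refine tsum_congr fun k => ?_
  rw [tterm]
  congr 1
  ring

lemma jTheta_one_as_two (z T : ℂ) : jTheta 1 z T = -jTheta 2 (z + 1/2) T := by
  rw [jTheta_one_eq, jTheta_two_eq]

lemma jTheta_four_as_three (z T : ℂ) : jTheta 4 z T = jTheta 3 (z + 1/2) T := by
  rw [jTheta_four_eq, jTheta_three_eq]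

end

noncomputable section
open Complex

private lemma exp_two_pi_I_int (k : ℤ) :
    Complex.exp (2 * (Real.pi : ℂ) * Complex.I * (k : ℂ)) = 1 := by
  have := Complex.exp_int_mul_two_pi_mul_I k
  rw [← this]
  congr 1
  ring

lemma jTheta_two_add_one (z T : ℂ) : jTheta 2 (z + 1) T = -jTheta 2 z T := by
  rw [jTheta_two_eq, jTheta_two_eq, ← tsum_neg]
  refine tsum_congr fun k => ?_
  rw [tterm, tterm]
  have h1 : (Real.pi : ℂ) * Complex.I * T * ((k : ℂ) + 1/2)^2
      + 2 * (Real.pi : ℂ) * Complex.I * (z+1) * ((k : ℂ) + 1/2)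
      = ((Real.pi : ℂ) * Complex.I * T * ((k : ℂ) + 1/2)^2
      + 2 * (Real.pi : ℂ) * Complex.I * z * ((k : ℂ) + 1/2))
      + (2 * (Real.pi : ℂ) * Complex.I * (k:ℂ) + (Real.pi : ℂ) * Complex.I) := by ring
  have h2 : Complex.exp (2 * (Real.pi : ℂ) * Complex.I * (k:ℂ) + (Real.pi : ℂ) * Complex.I)
      = -1 := by
    rw [Complex.exp_add, exp_two_pi_I_int, Complex.exp_pi_mul_I]
    ring
  rw [h1, Complex.exp_add, h2]
  ring

lemma jTheta_three_add_one (z T : ℂ) : jTheta 3 (z + 1) T = jTheta 3 z T := by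
  rw [jTheta_three_eq, jTheta_three_eq]
  refine tsum_congr fun k => ?_
  rw [tterm, tterm]
  have h1 : (Real.pi : ℂ) * Complex.I * T * ((k : ℂ) + 0)^2
      + 2 * (Real.pi : ℂ) * Complex.I * (z+1) * ((k : ℂ) + 0)
      = ((Real.pi : ℂ) * Complex.I * T * ((k : ℂ) + 0)^2
      + 2 * (Real.pi : ℂ) * Complex.I * z * ((k : ℂ) + 0))
      + 2 * (Real.pi : ℂ) * Complex.I * (k:ℂ) := by ring
  rw [h1, Complex.exp_add, exp_two_pi_I_int, mul_one]

/-- The reflection `k ↦ -1-k` as an equiv of `ℤ`. -/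
def negOneSub : ℤ ≃ ℤ where
  toFun k := -1 - k
  invFun k := -1 - k
  left_inv k := by ring
  right_inv k := by ring

lemma jTheta_two_neg (z T : ℂ) : jTheta 2 (-z) T = jTheta 2 z T := by
  rw [jTheta_two_eq, jTheta_two_eq, ← negOneSub.tsum_eq (tterm (1/2) (-z) T)]
  refine tsum_congr fun k => ?_
  show tterm (1/2) (-z) T (-1-k) = tterm (1/2) z T k
  rw [tterm, tterm]
  congr 1
  push_cast
  ring

lemma jTheta_one_neg (z T : ℂ) : jTheta 1 (-z) T = -jTheta 1 z T := by
  rw [jTheta_one_as_two, jTheta_one_as_two]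
  have h1 : -z + 1/2 = -(z - 1/2) := by ring
  have h2 : z + 1/2 = (z - 1/2) + 1 := by ring
  rw [h1, jTheta_two_neg, h2, jTheta_two_add_one]
  ring

end

noncomputable section
open Complex

/-- Even sublattice parametrization. -/
def evenPar : ℤ × ℤ ≃ {ab : ℤ × ℤ // ab ∈ {ab : ℤ × ℤ | (ab.1 + ab.2) % 2 = 0}} where
  toFun pq := ⟨(pq.1 + pq.2, pq.1 - pq.2), by simp only [Set.mem_setOf_eq]; omega⟩
  invFun ab := ((ab.1.1 + ab.1.2) / 2, (ab.1.1 - ab.1.2) / 2)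
  left_inv pq := by
    obtain ⟨p, q⟩ := pq
    simp only
    rw [Prod.ext_iff]
    constructor <;> simp <;> omega
  right_inv ab := by
    obtain ⟨⟨a, b⟩, h⟩ := ab
    simp only [Set.mem_setOf_eq] at h
    apply Subtype.ext
    simp only
    rw [Prod.ext_iff]
    constructor <;> simp <;> omega

/-- Odd sublattice parametrization. -/
def oddPar : ℤ × ℤ ≃ {ab : ℤ × ℤ // ab ∈ ({ab : ℤ × ℤ | (ab.1 + ab.2) % 2 = 0} : Set (ℤ × ℤ))ᶜ} where
  toFun pq := ⟨(pq.1 + pq.2 + 1, pq.1 - pq.2), by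
    simp only [Set.mem_compl_iff, Set.mem_setOf_eq]; omega⟩
  invFun ab := ((ab.1.1 + ab.1.2 - 1) / 2, (ab.1.1 - ab.1.2 - 1) / 2)
  left_inv pq := by
    obtain ⟨p, q⟩ := pq
    simp only
    rw [Prod.ext_iff]
    constructor <;> simp <;> omega
  right_inv ab := by
    obtain ⟨⟨a, b⟩, h⟩ := ab
    simp only [Set.mem_compl_iff, Set.mem_setOf_eq] at h
    apply Subtype.ext
    simp only
    rw [Prod.ext_iff]
    constructor <;> simp <;> omega

lemma split_lattice_sum (F : ℤ × ℤ → ℂ) (hF : Summable F) :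
    ∑' ab : ℤ × ℤ, F ab
      = (∑' pq : ℤ × ℤ, F (pq.1 + pq.2, pq.1 - pq.2))
        + ∑' pq : ℤ × ℤ, F (pq.1 + pq.2 + 1, pq.1 - pq.2) := by
  classical
  set s : Set (ℤ × ℤ) := {ab : ℤ × ℤ | (ab.1 + ab.2) % 2 = 0} with hs
  have h1 : ∑' x : s, F x = ∑' pq : ℤ × ℤ, F (pq.1 + pq.2, pq.1 - pq.2) := by
    rw [← evenPar.tsum_eq (fun x : s => F x)]
    rfl
  have h2 : ∑' x : ↥sᶜ, F x = ∑' pq : ℤ × ℤ, F (pq.1 + pq.2 + 1, pq.1 - pq.2) := by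
    rw [← oddPar.tsum_eq (fun x : ↥sᶜ => F x)]
    rfl
  rw [← h1, ← h2]
  exact (Summable.tsum_add_tsum_compl (hF.subtype s) (hF.subtype sᶜ)).symm

end

noncomputable section
open Complex

lemma two_mul_im (T : ℂ) : (2 * T).im = 2 * T.im := by
  simp [Complex.mul_im]

lemma quad_three {T : ℂ} (hT : 0 < T.im) (X Y : ℂ) :
    jTheta 3 X T * jTheta 3 Y T
      = jTheta 3 (X + Y) (2*T) * jTheta 3 (X - Y) (2*T)
        + jTheta 2 (X + Y) (2*T) * jTheta 2 (X - Y) (2*T) := by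
  have h2T : 0 < (2*T).im := by rw [two_mul_im]; linarith
  rw [jTheta_three_eq X, jTheta_three_eq Y,
    tsum_mul_tsum_of_summable_norm (summable_norm_tterm hT) (summable_norm_tterm hT),
    split_lattice_sum _ (summable_mul_of_summable_norm
      (summable_norm_tterm hT) (summable_norm_tterm hT))]
  congr 1
  · rw [jTheta_three_eq (X+Y), jTheta_three_eq (X-Y),
      tsum_mul_tsum_of_summable_norm (summable_norm_tterm h2T) (summable_norm_tterm h2T)]
    refine tsum_congr fun pq => ?_
    obtain ⟨p, q⟩ := pq
    simp only [tterm, ← Complex.exp_add]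
    congr 1
    push_cast
    ring
  · rw [jTheta_two_eq (X+Y), jTheta_two_eq (X-Y),
      tsum_mul_tsum_of_summable_norm (summable_norm_tterm h2T) (summable_norm_tterm h2T)]
    refine tsum_congr fun pq => ?_
    obtain ⟨p, q⟩ := pq
    simp only [tterm, ← Complex.exp_add]
    congr 1
    push_cast
    ring

lemma quad_two {T : ℂ} (hT : 0 < T.im) (X Y : ℂ) :
    jTheta 2 X T * jTheta 2 Y T
      = jTheta 2 (X + Y) (2*T) * jTheta 3 (X - Y) (2*T)
        + jTheta 3 (X + Y) (2*T) * jTheta 2 (X - Y) (2*T) := by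
  have h2T : 0 < (2*T).im := by rw [two_mul_im]; linarith
  rw [jTheta_two_eq X, jTheta_two_eq Y,
    tsum_mul_tsum_of_summable_norm (summable_norm_tterm hT) (summable_norm_tterm hT),
    split_lattice_sum _ (summable_mul_of_summable_norm
      (summable_norm_tterm hT) (summable_norm_tterm hT))]
  congr 1
  · rw [jTheta_two_eq (X+Y), jTheta_three_eq (X-Y),
      tsum_mul_tsum_of_summable_norm (summable_norm_tterm h2T) (summable_norm_tterm h2T)]
    refine tsum_congr fun pq => ?_
    obtain ⟨p, q⟩ := pq
    simp only [tterm, ← Complex.exp_add]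
    congr 1
    push_cast
    ring
  · rw [jTheta_three_eq (X+Y), jTheta_two_eq (X-Y),
      tsum_mul_tsum_of_summable_norm (summable_norm_tterm h2T) (summable_norm_tterm h2T),
      ← (Equiv.prodCongr (Equiv.addRight (1:ℤ)) (Equiv.refl ℤ)).tsum_eq
        (fun pq : ℤ × ℤ => tterm 0 (X+Y) (2*T) pq.1 * tterm (1/2) (X-Y) (2*T) pq.2)]
    refine tsum_congr fun pq => ?_
    obtain ⟨p, q⟩ := pq
    simp only [Equiv.prodCongr_apply, Equiv.coe_addRight, Equiv.refl_apply, Prod.map,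
      tterm, ← Complex.exp_add]
    congr 1
    push_cast
    ring

lemma quad_four {T : ℂ} (hT : 0 < T.im) (X Y : ℂ) :
    jTheta 4 X T * jTheta 4 Y T
      = jTheta 3 (X + Y) (2*T) * jTheta 3 (X - Y) (2*T)
        - jTheta 2 (X + Y) (2*T) * jTheta 2 (X - Y) (2*T) := by
  rw [jTheta_four_as_three, jTheta_four_as_three, quad_three hT]
  have h1 : X + 1/2 + (Y + 1/2) = (X + Y) + 1 := by ring
  have h2 : X + 1/2 - (Y + 1/2) = X - Y := by ring
  rw [h1, h2, jTheta_three_add_one, jTheta_two_add_one]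
  ring

lemma quad_one {T : ℂ} (hT : 0 < T.im) (X Y : ℂ) :
    jTheta 1 X T * jTheta 1 Y T
      = jTheta 3 (X + Y) (2*T) * jTheta 2 (X - Y) (2*T)
        - jTheta 2 (X + Y) (2*T) * jTheta 3 (X - Y) (2*T) := by
  rw [jTheta_one_as_two, jTheta_one_as_two]
  have h0 : -jTheta 2 (X + 1/2) T * -jTheta 2 (Y + 1/2) T
      = jTheta 2 (X + 1/2) T * jTheta 2 (Y + 1/2) T := by ring
  rw [h0, quad_two hT]
  have h1 : X + 1/2 + (Y + 1/2) = (X + Y) + 1 := by ring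
  have h2 : X + 1/2 - (Y + 1/2) = X - Y := by ring
  rw [h1, h2, jTheta_three_add_one, jTheta_two_add_one]
  ring

end

noncomputable section
open Complex

/-- `±1` sign of a Bool. -/
def sgB (e : Bool) : ℂ := if e then 1 else -1

/-- argument `±2x - 2sη`. -/
def uarg (η s x : ℂ) (e : Bool) : ℂ := if e then 2*x - 2*s*η else -(2*x) - 2*s*η

/-- shift coefficient of the Sklyanin operator `s_{a-1}`:
coefficient of `f(z ± η)` (without the `θ₁(2z)` denominator). -/
def cA (τ η s x : ℂ) (a : ℕ) (e : Bool) : ℂ :=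
  if e then jTheta a (2*x - 2*s*η) τ else -(jTheta a (-(2*x) - 2*s*η) τ)

/-- shift coefficient of the L-operator entry `L_{ij}` (with denominator). -/
def cLf (τ η s lam x : ℂ) (i j : Fin 2) (e : Bool) : ℂ :=
  (if i = 0 then
    if j = 0 then
      (1/2) * (jTheta 1 (2*lam) τ * cA τ η s x 1 e + jTheta 4 (2*lam) τ * cA τ η s x 4 e)
    else
      (1/2) * (jTheta 2 (2*lam) τ * cA τ η s x 2 e + jTheta 3 (2*lam) τ * cA τ η s x 3 e)
  else
    if j = 0 then
      (1/2) * (jTheta 2 (2*lam) τ * cA τ η s x 2 e - jTheta 3 (2*lam) τ * cA τ η s x 3 e)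
    else
      (1/2) * (jTheta 1 (2*lam) τ * cA τ η s x 1 e - jTheta 4 (2*lam) τ * cA τ η s x 4 e))
  / jTheta 1 (2*x) τ

lemma LOpN_apply (τ η s lam : ℂ) (N : ℕ) (n : Fin N) (i j : Fin 2)
    (f : (Fin N → ℂ) → ℂ) (z : Fin N → ℂ) :
    LOpN τ η s lam N n i j f z
      = cLf τ η s lam (z n) i j true * f (Function.update z n (z n + η))
        + cLf τ η s lam (z n) i j false * f (Function.update z n (z n - η)) := by
  unfold LOpN sOpN cLf cA
  fin_cases i <;> fin_cases j <;> simp only [if_true, if_false, Bool.true_eq_false] <;>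
    norm_num <;> ring

/-- row vector components of the rank-one factorization. -/
def rvF (τ : ℂ) (b : Fin 2) (M : ℂ) : ℂ :=
  if b = 0 then jTheta 2 M (2*τ) + jTheta 3 M (2*τ) else jTheta 2 M (2*τ) - jTheta 3 M (2*τ)

/-- column vector components of the rank-one factorization. -/
def cvF (τ : ℂ) (b : Fin 2) (P : ℂ) : ℂ :=
  if b = 0 then jTheta 3 P (2*τ) - jTheta 2 P (2*τ) else jTheta 3 P (2*τ) + jTheta 2 P (2*τ)

/-- Rank-one factorization of the shift components of the L-operator. -/
lemma cLf_factor {τ : ℂ} (hτ : 0 < τ.im) (η s lam x : ℂ) (i j : Fin 2) (e : Bool) :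
    cLf τ η s lam x i j e
      = sgB e / (2 * jTheta 1 (2*x) τ)
          * (rvF τ i (2*lam - uarg η s x e) * cvF τ j (2*lam + uarg η s x e)) := by
  have q1 := fun Y => quad_one hτ (2*lam) Y
  have q2 := fun Y => quad_two hτ (2*lam) Y
  have q3 := fun Y => quad_three hτ (2*lam) Y
  have q4 := fun Y => quad_four hτ (2*lam) Y
  fin_cases i <;> fin_cases j <;> cases e <;>
    simp only [cLf, cA, rvF, cvF, sgB, uarg, if_true, if_false, Bool.false_eq_true,
      Fin.mk_one, Fin.mk_zero, one_ne_zero, Fin.zero_eta] <;>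
    norm_num <;>
    first
      | (rw [q1 _, q4 _]; ring)
      | (rw [q2 _, q3 _]; ring)

/-- Contraction of intertwining vectors back to a product of `θ₁`'s. -/
lemma pair_contract {τ : ℂ} (hτ : 0 < τ.im) (lam v w : ℂ) :
    ∑ b : Fin 2, cvF τ b (2*lam + v) * rvF τ b (2*lam - w)
      = 2 * jTheta 1 (lam + (v - w)/2 + lam) τ * jTheta 1 ((v + w)/2) τ := by
  have h := quad_one hτ (lam + (v - w)/2 + lam) ((v + w)/2)
  rw [show lam + (v - w)/2 + lam + (v + w)/2 = 2*lam + v by ring,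
    show lam + (v - w)/2 + lam - (v + w)/2 = 2*lam - w by ring] at h
  rw [Fin.sum_univ_two]
  simp only [rvF, cvF, if_true, if_false, one_ne_zero]
  norm_num
  linear_combination (-2) * h

end

noncomputable section
open Complex Function

variable {N : ℕ}

/-- point shifted by `±η` at the sites in `ns`. -/
def shiftPt (η : ℂ) (ns : List (Fin N)) (ε : Fin N → Bool) (z : Fin N → ℂ) : Fin N → ℂ :=
  fun m => z m + if m ∈ ns then (if ε m then η else -η) else 0

/-- Bool-configurations supported on `ns`. -/
def epsSet (N : ℕ) (ns : List (Fin N)) : Finset (Fin N → Bool) :=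
  Finset.univ.filter (fun ε => ∀ m, m ∉ ns → ε m = false)

lemma epsSet_nil : epsSet N ([] : List (Fin N)) = {fun _ => false} := by
  ext ε
  simp only [epsSet, Finset.mem_filter, Finset.mem_univ, true_and, List.not_mem_nil,
    not_false_iff, forall_true_left, Finset.mem_singleton]
  constructor
  · intro h
    funext m
    simp [h m]
  · intro h m
    rw [h]

lemma epsSet_cons_sum (n : Fin N) (ns : List (Fin N)) (hn : n ∉ ns)
    (G : (Fin N → Bool) → ℂ) :
    ∑ ε ∈ epsSet N (n :: ns), G ε
      = ∑ ε ∈ epsSet N ns, G (Function.update ε n true)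
        + ∑ ε ∈ epsSet N ns, G (Function.update ε n false) := by
  classical
  have hmem : ∀ (e : Bool), ∀ ε ∈ epsSet N ns, Function.update ε n e ∈ epsSet N (n :: ns) := by
    intro e ε hε
    simp only [epsSet, Finset.mem_filter, Finset.mem_univ, true_and] at hε ⊢
    intro m hm
    have hmn : m ≠ n := fun h => hm (h ▸ List.mem_cons_self (a := n) (l := ns))
    rw [Function.update_of_ne hmn]
    exact hε m (fun h => hm (List.mem_cons_of_mem n h))
  have hinj : ∀ (e : Bool), ∀ ε₁ ∈ epsSet N ns, ∀ ε₂ ∈ epsSet N ns,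
      Function.update ε₁ n e = Function.update ε₂ n e → ε₁ = ε₂ := by
    intro e ε₁ h₁ ε₂ h₂ h
    simp only [epsSet, Finset.mem_filter, Finset.mem_univ, true_and] at h₁ h₂
    funext m
    by_cases hm : m = n
    · subst hm
      rw [h₁ m hn, h₂ m hn]
    · have := congrFun h m
      rwa [Function.update_of_ne hm, Function.update_of_ne hm] at this
  have hsplit : epsSet N (n :: ns)
      = (epsSet N ns).image (fun ε => Function.update ε n true)
        ∪ (epsSet N ns).image (fun ε => Function.update ε n false) := by
    apply Finset.Subset.antisymm
    · intro ε hε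
      simp only [epsSet, Finset.mem_filter, Finset.mem_univ, true_and] at hε
      have hε' : Function.update ε n false ∈ epsSet N ns := by
        simp only [epsSet, Finset.mem_filter, Finset.mem_univ, true_and]
        intro m hm
        by_cases hmn : m = n
        · subst hmn; rw [Function.update_self]
        · rw [Function.update_of_ne hmn]
          exact hε m (by simp [List.mem_cons, hmn, hm])
      have hback : ∀ e, ε n = e → Function.update (Function.update ε n false) n e = ε := by
        intro e he
        funext m
        by_cases hmn : m = n
        · subst hmn; rw [Function.update_self, he]
        · rw [Function.update_of_ne hmn, Function.update_of_ne hmn]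
      cases he : ε n
      · exact Finset.mem_union.mpr (Or.inr (Finset.mem_image.mpr ⟨_, hε', hback false he⟩))
      · exact Finset.mem_union.mpr (Or.inl (Finset.mem_image.mpr ⟨_, hε', hback true he⟩))
    · intro ε hε
      rcases Finset.mem_union.mp hε with h | h
      · obtain ⟨ε', hε', rfl⟩ := Finset.mem_image.mp h
        exact hmem true ε' hε'
      · obtain ⟨ε', hε', rfl⟩ := Finset.mem_image.mp h
        exact hmem false ε' hε'
  have hdisj : Disjoint ((epsSet N ns).image (fun ε => Function.update ε n true))
      ((epsSet N ns).image (fun ε => Function.update ε n false)) := by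
    rw [Finset.disjoint_left]
    intro ε h1 h2
    obtain ⟨ε₁, _, rfl⟩ := Finset.mem_image.mp h1
    obtain ⟨ε₂, _, h⟩ := Finset.mem_image.mp h2
    have hc := congrFun h n
    simp only [Function.update_self] at hc
    exact Bool.noConfusion hc
  rw [hsplit, Finset.sum_union hdisj, Finset.sum_image (hinj true), Finset.sum_image (hinj false)]

lemma fold_expand (η : ℂ) (κ : Fin N → ℂ → Bool → ℂ) (f : (Fin N → ℂ) → ℂ) :
    ∀ (ns : List (Fin N)), ns.Nodup → ∀ (z : Fin N → ℂ),
    (ns.foldr (fun n g => fun z' => κ n (z' n) true * g (Function.update z' n (z' n + η))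
        + κ n (z' n) false * g (Function.update z' n (z' n - η))) f) z
      = ∑ ε ∈ epsSet N ns,
          (ns.map (fun n => κ n (z n) (ε n))).prod * f (shiftPt η ns ε z) := by
  intro ns
  induction ns with
  | nil =>
    intro _ z
    rw [epsSet_nil, Finset.sum_singleton]
    simp only [List.foldr_nil, List.map_nil, List.prod_nil, one_mul]
    congr 1
    funext m
    simp [shiftPt]
  | cons n ns ih =>
    intro hnd z
    have hn : n ∉ ns := (List.nodup_cons.mp hnd).1
    have hnd' : ns.Nodup := (List.nodup_cons.mp hnd).2
    rw [List.foldr_cons, ih hnd' (Function.update z n (z n + η)),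
      ih hnd' (Function.update z n (z n - η)),
      epsSet_cons_sum n ns hn, Finset.mul_sum, Finset.mul_sum]
    congr 1
    · refine Finset.sum_congr rfl fun ε _ => ?_
      have hprod : (ns.map (fun m => κ m (Function.update z n (z n + η) m) (ε m))).prod
          = (ns.map (fun m => κ m (z m) (Function.update ε n true m))).prod := by
        congr 1
        refine List.map_congr_left fun m hm => ?_
        have hmn : m ≠ n := fun h => hn (h ▸ hm)
        rw [Function.update_of_ne hmn, Function.update_of_ne hmn]
      have hpt : shiftPt η ns ε (Function.update z n (z n + η))
          = shiftPt η (n :: ns) (Function.update ε n true) z := by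
        funext m
        by_cases hmn : m = n
        · subst hmn
          simp only [shiftPt, Function.update_self, hn, if_neg hn, List.mem_cons, true_or,
            if_true, if_pos (Or.inl rfl)]
          simp [hn]
        · simp only [shiftPt, Function.update_of_ne hmn, List.mem_cons]
          by_cases hm : m ∈ ns
          · simp [hm, hmn]
          · simp [hm, hmn]
      rw [List.map_cons, List.prod_cons, Function.update_self, hprod, hpt]
      ring
    · refine Finset.sum_congr rfl fun ε _ => ?_
      have hprod : (ns.map (fun m => κ m (Function.update z n (z n - η) m) (ε m))).prod
          = (ns.map (fun m => κ m (z m) (Function.update ε n false m))).prod := by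
        congr 1
        refine List.map_congr_left fun m hm => ?_
        have hmn : m ≠ n := fun h => hn (h ▸ hm)
        rw [Function.update_of_ne hmn, Function.update_of_ne hmn]
      have hpt : shiftPt η ns ε (Function.update z n (z n - η))
          = shiftPt η (n :: ns) (Function.update ε n false) z := by
        funext m
        by_cases hmn : m = n
        · subst hmn
          simp only [shiftPt, Function.update_self, List.mem_cons]
          simp [hn, sub_eq_add_neg]
        · simp only [shiftPt, Function.update_of_ne hmn, List.mem_cons]
          by_cases hm : m ∈ ns
          · simp [hm, hmn]
          · simp [hm, hmn]
      rw [List.map_cons, List.prod_cons, Function.update_self, hprod, hpt]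
      ring

end

noncomputable section
open Complex Function

lemma transfer_expand (τ η s lam : ℂ) (N : ℕ) (f : (Fin N → ℂ) → ℂ) (z : Fin N → ℂ) :
    transfer τ η s lam N f z
      = ∑ ε : Fin N → Bool,
          (∑ i : Fin N → Fin 2, ∏ n : Fin N, cLf τ η s lam (z n) (i n) (i (cyc n)) (ε n))
            * f (fun m => z m + (if ε m then η else -η)) := by
  classical
  rw [transfer]
  have key : ∀ i : Fin N → Fin 2,
      ((List.ofFn (fun n : Fin N =>
        (LOpN τ η s lam N n (i n) (i (cyc n)) :
          ((Fin N → ℂ) → ℂ) → ((Fin N → ℂ) → ℂ)))).foldr (fun op g => op g) f) z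
      = ∑ ε : Fin N → Bool,
          (∏ n : Fin N, cLf τ η s lam (z n) (i n) (i (cyc n)) (ε n))
            * f (fun m => z m + (if ε m then η else -η)) := by
    intro i
    rw [List.ofFn_eq_map, List.foldr_map]
    have h1 : (fun (n : Fin N) (g : (Fin N → ℂ) → ℂ) => LOpN τ η s lam N n (i n) (i (cyc n)) g)
        = fun n g => fun z' =>
            cLf τ η s lam (z' n) (i n) (i (cyc n)) true * g (Function.update z' n (z' n + η))
            + cLf τ η s lam (z' n) (i n) (i (cyc n)) false * g (Function.update z' n (z' n - η)) := by
      funext n g z'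
      exact LOpN_apply τ η s lam N n (i n) (i (cyc n)) g z'
    rw [h1, fold_expand η (fun n x e => cLf τ η s lam x (i n) (i (cyc n)) e) f
      (List.finRange N) (List.nodup_finRange N) z]
    have h2 : epsSet N (List.finRange N) = Finset.univ := by
      apply Finset.eq_univ_iff_forall.mpr
      intro ε
      simp only [epsSet, Finset.mem_filter, Finset.mem_univ, true_and]
      intro m hm
      exact absurd (List.mem_finRange m) hm
    rw [h2]
    refine Finset.sum_congr rfl fun ε _ => ?_
    have hp : ((List.finRange N).map
        (fun n => cLf τ η s lam (z n) (i n) (i (cyc n)) (ε n))).prod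
        = ∏ n : Fin N, cLf τ η s lam (z n) (i n) (i (cyc n)) (ε n) := by
      rw [← List.ofFn_eq_map, List.prod_ofFn]
    have hf : shiftPt η (List.finRange N) ε z
        = fun m => z m + if ε m then η else -η := by
      funext m
      simp [shiftPt, List.mem_finRange]
    rw [hp, hf]
  simp_rw [key]
  rw [Finset.sum_comm]
  refine Finset.sum_congr rfl fun ε _ => ?_
  rw [Finset.sum_mul]

end

noncomputable section
open Complex Function

lemma cyc_eq_add_one {N : ℕ} [NeZero N] (hN : 2 ≤ N) (n : Fin N) :
    cyc n = n + 1 := by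
  apply Fin.ext
  rw [Fin.add_def, Fin.val_one', Nat.mod_eq_of_lt (show 1 < N by omega)]
  rfl

lemma isum {τ : ℂ} (hτ : 0 < τ.im) (η s lam : ℂ) {N : ℕ} (hN : 2 ≤ N)
    (z : Fin N → ℂ) (ε : Fin N → Bool) :
    ∑ i : Fin N → Fin 2, ∏ n : Fin N, cLf τ η s lam (z n) (i n) (i (cyc n)) (ε n)
      = (∏ n : Fin N, (sgB (ε n) / (2 * jTheta 1 (2 * z n) τ)))
        * ∏ n : Fin N,
            (2 * jTheta 1 (lam + (uarg η s (z n) (ε n) - uarg η s (z (cyc n)) (ε (cyc n)))/2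
                  + lam) τ
              * jTheta 1 ((uarg η s (z n) (ε n) + uarg η s (z (cyc n)) (ε (cyc n)))/2) τ) := by
  classical
  haveI : NeZero N := ⟨by omega⟩
  set u : Fin N → ℂ := fun n => uarg η s (z n) (ε n) with hu
  have step1 : ∀ i : Fin N → Fin 2,
      ∏ n : Fin N, cLf τ η s lam (z n) (i n) (i (cyc n)) (ε n)
      = (∏ n : Fin N, (sgB (ε n) / (2 * jTheta 1 (2 * z n) τ)))
        * ∏ n : Fin N, (rvF τ (i n) (2*lam - u n) * cvF τ (i n) (2*lam + u (n - 1))) := by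
    intro i
    have h1 : ∀ n : Fin N, cLf τ η s lam (z n) (i n) (i (cyc n)) (ε n)
        = (sgB (ε n) / (2 * jTheta 1 (2 * z n) τ))
          * (rvF τ (i n) (2*lam - u n) * cvF τ (i (cyc n)) (2*lam + u n)) :=
      fun n => cLf_factor hτ η s lam (z n) (i n) (i (cyc n)) (ε n)
    rw [Finset.prod_congr rfl (fun n _ => h1 n), Finset.prod_mul_distrib]
    congr 1
    rw [Finset.prod_mul_distrib, Finset.prod_mul_distrib]
    congr 1
    have h2 := Equiv.prod_comp (Equiv.addRight (1 : Fin N))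
      (fun m => cvF τ (i m) (2*lam + u (m - 1)))
    simp only [Equiv.coe_addRight] at h2
    rw [← h2]
    refine Finset.prod_congr rfl fun n _ => ?_
    rw [cyc_eq_add_one hN n, add_sub_cancel_right]
  rw [Finset.sum_congr rfl (fun i _ => step1 i), ← Finset.mul_sum]
  congr 1
  have h3 : ∑ i : Fin N → Fin 2,
      ∏ n : Fin N, (rvF τ (i n) (2*lam - u n) * cvF τ (i n) (2*lam + u (n - 1)))
      = ∏ n : Fin N, ∑ b : Fin 2, (rvF τ b (2*lam - u n) * cvF τ b (2*lam + u (n - 1))) := by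
    rw [Finset.prod_univ_sum]
    rw [Fintype.piFinset_univ]
  rw [h3]
  have h4 : ∀ n : Fin N, ∑ b : Fin 2, (rvF τ b (2*lam - u n) * cvF τ b (2*lam + u (n - 1)))
      = 2 * jTheta 1 (lam + (u (n-1) - u n)/2 + lam) τ * jTheta 1 ((u (n-1) + u n)/2) τ := by
    intro n
    rw [← pair_contract hτ lam (u (n-1)) (u n)]
    refine Finset.sum_congr rfl fun b _ => ?_
    ring
  rw [Finset.prod_congr rfl (fun n _ => h4 n)]
  have h5 := Equiv.prod_comp (Equiv.addRight (1 : Fin N))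
    (fun m => 2 * jTheta 1 (lam + (u (m-1) - u m)/2 + lam) τ * jTheta 1 ((u (m-1) + u m)/2) τ)
  simp only [Equiv.coe_addRight] at h5
  rw [← h5]
  refine Finset.prod_congr rfl fun n _ => ?_
  rw [add_sub_cancel_right, cyc_eq_add_one hN n]

end

noncomputable section
open Complex

lemma Tplus (τ η : ℂ) (n : ℕ) (x : ℂ) :
    jTheta 1 (x - (n:ℂ)*η) τ * PhiFun τ η n (x + 2*η)
      = jTheta 1 (x + ((n:ℂ)+2)*η) τ * PhiFun τ η n x := by
  unfold PhiFun
  have h1 : ∀ j ∈ Finset.range (n+1),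
      jTheta 1 (x + 2*η + (2*(j:ℂ) - (n:ℂ))*η) τ
      = jTheta 1 (x + (2*((j:ℕ)+1:ℕ) - (n:ℂ))*η) τ := by
    intro j _
    congr 1
    push_cast
    ring
  rw [Finset.prod_congr rfl h1]
  have h2 : jTheta 1 (x - (n:ℂ)*η) τ = jTheta 1 (x + (2*((0:ℕ):ℂ) - (n:ℂ))*η) τ := by
    congr 1
    push_cast
    ring
  have h3 : jTheta 1 (x + ((n:ℂ)+2)*η) τ = jTheta 1 (x + (2*((n+1:ℕ):ℂ) - (n:ℂ))*η) τ := by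
    congr 1
    push_cast
    ring
  rw [h2, h3]
  have h4 := Finset.prod_range_succ' (fun j : ℕ => jTheta 1 (x + (2*(j:ℂ) - (n:ℂ))*η) τ) (n+1)
  have h5 := Finset.prod_range_succ (fun j : ℕ => jTheta 1 (x + (2*(j:ℂ) - (n:ℂ))*η) τ) (n+1)
  have h6 : ∀ j ∈ Finset.range (n+1),
      jTheta 1 (x + (2*((j:ℕ)+1:ℕ) - (n:ℂ))*η) τ
      = jTheta 1 (x + (2*(((j:ℕ):ℂ)+1) - (n:ℂ))*η) τ := by
    intro j _
    congr 1
    push_cast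
    ring
  rw [Finset.prod_congr rfl h6]
  calc jTheta 1 (x + (2*((0:ℕ):ℂ) - (n:ℂ))*η) τ
        * ∏ j ∈ Finset.range (n+1), jTheta 1 (x + (2*(((j:ℕ):ℂ)+1) - (n:ℂ))*η) τ
      = ∏ j ∈ Finset.range (n+2), jTheta 1 (x + (2*(j:ℂ) - (n:ℂ))*η) τ := by
        rw [h4]
        push_cast
        ring
    _ = jTheta 1 (x + (2*((n+1:ℕ):ℂ) - (n:ℂ))*η) τ
        * ∏ j ∈ Finset.range (n+1), jTheta 1 (x + (2*(j:ℂ) - (n:ℂ))*η) τ := by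
        rw [h5]
        push_cast
        ring

lemma Tminus (τ η : ℂ) (n : ℕ) (x : ℂ) :
    jTheta 1 (x + (n:ℂ)*η) τ * PhiFun τ η n (x - 2*η)
      = jTheta 1 (x - ((n:ℂ)+2)*η) τ * PhiFun τ η n x := by
  have h := Tplus τ η n (x - 2*η)
  rw [show x - 2*η + 2*η = x by ring, show x - 2*η - (n:ℂ)*η = x - ((n:ℂ)+2)*η by ring,
    show x - 2*η + ((n:ℂ)+2)*η = x + (n:ℂ)*η by ring] at h
  exact h.symm

/-- The per-link intertwining identity. -/
lemma link (τ η : ℂ) (n : ℕ) (x y : ℂ) (e e' : Bool) :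
    jTheta 1 (((if e then x else -x) + (if e' then y else -y)) - (n:ℂ)*η) τ
        * phiFun τ η n (x + sgB e * η) (y + sgB e' * η)
      = jTheta 1 (((if e then x else -x) + (if e' then y else -y)) + ((n:ℂ)+2)*η) τ
        * phiFun τ η n x y := by
  unfold phiFun sgB
  cases e <;> cases e' <;> simp only [if_true, if_false, Bool.false_eq_true]
  · -- e = false, e' = false : u = -(x+y), sum part shifts by -2η
    rw [show x + -1*η - (y + -1*η) = x - y by ring,
      show x + -1*η + (y + -1*η) = (x+y) - 2*η by ring]
    have h := Tminus τ η n (x+y)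
    rw [show -x + -y - (n:ℂ)*η = -((x+y) + (n:ℂ)*η) by ring, jTheta_one_neg,
      show -x + -y + ((n:ℂ)+2)*η = -((x+y) - ((n:ℂ)+2)*η) by ring, jTheta_one_neg]
    ring_nf
    ring_nf at h
    linear_combination (-(PhiFun τ η n (x - y))) * h
  · -- e = false, e' = true : u = -(x-y), diff part shifts by -2η
    rw [show x + -1*η - (y + 1*η) = (x - y) - 2*η by ring,
      show x + -1*η + (y + 1*η) = x + y by ring]
    have h := Tminus τ η n (x-y)
    rw [show -x + y - (n:ℂ)*η = -((x-y) + (n:ℂ)*η) by ring, jTheta_one_neg,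
      show -x + y + ((n:ℂ)+2)*η = -((x-y) - ((n:ℂ)+2)*η) by ring, jTheta_one_neg]
    ring_nf
    ring_nf at h
    linear_combination (-(PhiFun τ η n (x + y))) * h
  · -- e = true, e' = false : u = x - y, diff part shifts by +2η
    rw [show x + 1*η - (y + -1*η) = (x - y) + 2*η by ring,
      show x + 1*η + (y + -1*η) = x + y by ring]
    have h := Tplus τ η n (x-y)
    rw [show x + -y - (n:ℂ)*η = (x-y) - (n:ℂ)*η by ring,
      show x + -y + ((n:ℂ)+2)*η = (x-y) + ((n:ℂ)+2)*η by ring]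
    linear_combination (PhiFun τ η n (x + y)) * h
  · -- e = true, e' = true : u = x + y, sum part shifts by +2η
    rw [show x + 1*η - (y + 1*η) = x - y by ring,
      show x + 1*η + (y + 1*η) = (x+y) + 2*η by ring]
    have h := Tplus τ η n (x+y)
    rw [show x + y - (n:ℂ)*η = (x+y) - (n:ℂ)*η by ring,
      show x + y + ((n:ℂ)+2)*η = (x+y) + ((n:ℂ)+2)*η by ring]
    linear_combination (PhiFun τ η n (x - y)) * h

end

/-- Multiplication by `Φ = ∏_i φ_ℓ(z_i, z_{i+1})` intertwines the
spin-`(−ℓ−1)` and spin-`ℓ` transfer matrices: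
`T^{(ℓ)}(λ)(Φ·f) = Φ·(T^{(−ℓ−1)}(λ)f)`, where `2ℓ = n2ℓ ∈ ℤ≥0`. -/
theorem transfer_intertwining (τ η lam : ℂ) (hτ : 0 < τ.im) (N : ℕ) (hN : 2 ≤ N)
    (n2ℓ : ℕ) (f : (Fin N → ℂ) → ℂ) (z : Fin N → ℂ)
    (hz : ∀ n : Fin N, jTheta 1 (2 * z n) τ ≠ 0) :
    transfer τ η ((n2ℓ : ℂ)/2) lam N
        (fun w => (∏ n : Fin N, phiFun τ η n2ℓ (w n) (w (cyc n))) * f w) z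
      = (∏ n : Fin N, phiFun τ η n2ℓ (z n) (z (cyc n))) *
          transfer τ η (-((n2ℓ : ℂ)/2) - 1) lam N f z := by
  classical
  set s₁ : ℂ := (n2ℓ : ℂ)/2 with hs₁
  set s₂ : ℂ := -((n2ℓ : ℂ)/2) - 1 with hs₂
  rw [transfer_expand, transfer_expand, Finset.mul_sum]
  refine Finset.sum_congr rfl fun ε _ => ?_
  rw [isum hτ η s₁ lam hN z ε, isum hτ η s₂ lam hN z ε]
  set zε : Fin N → ℂ := fun m => z m + (if ε m then η else -η) with hzε
  -- abbreviations
  set W : ℂ := ∏ n : Fin N, (sgB (ε n) / (2 * jTheta 1 (2 * z n) τ)) with hW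
  have key :
      (∏ n : Fin N,
        (2 * jTheta 1 (lam + (uarg η s₁ (z n) (ε n) - uarg η s₁ (z (cyc n)) (ε (cyc n)))/2
            + lam) τ
          * jTheta 1 ((uarg η s₁ (z n) (ε n) + uarg η s₁ (z (cyc n)) (ε (cyc n)))/2) τ))
        * (∏ n : Fin N, phiFun τ η n2ℓ (zε n) (zε (cyc n)))
      = (∏ n : Fin N,
        (2 * jTheta 1 (lam + (uarg η s₂ (z n) (ε n) - uarg η s₂ (z (cyc n)) (ε (cyc n)))/2
            + lam) τ
          * jTheta 1 ((uarg η s₂ (z n) (ε n) + uarg η s₂ (z (cyc n)) (ε (cyc n)))/2) τ))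
        * (∏ n : Fin N, phiFun τ η n2ℓ (z n) (z (cyc n))) := by
    rw [← Finset.prod_mul_distrib, ← Finset.prod_mul_distrib]
    refine Finset.prod_congr rfl fun n _ => ?_
    have ha1 : (uarg η s₁ (z n) (ε n) - uarg η s₁ (z (cyc n)) (ε (cyc n)))/2
        = (if ε n then z n else -z n) - (if ε (cyc n) then z (cyc n) else -z (cyc n)) := by
      cases hε : ε n <;> cases hε' : ε (cyc n) <;> simp only [uarg, if_true, if_false,
        Bool.false_eq_true] <;> ring
    have hb1 : (uarg η s₂ (z n) (ε n) - uarg η s₂ (z (cyc n)) (ε (cyc n)))/2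
        = (if ε n then z n else -z n) - (if ε (cyc n) then z (cyc n) else -z (cyc n)) := by
      cases hε : ε n <;> cases hε' : ε (cyc n) <;> simp only [uarg, if_true, if_false,
        Bool.false_eq_true] <;> ring
    have ha2 : (uarg η s₁ (z n) (ε n) + uarg η s₁ (z (cyc n)) (ε (cyc n)))/2
        = ((if ε n then z n else -z n) + (if ε (cyc n) then z (cyc n) else -z (cyc n)))
            - (n2ℓ : ℂ)*η := by
      rw [hs₁]
      cases hε : ε n <;> cases hε' : ε (cyc n) <;> simp only [uarg, if_true, if_false,
        Bool.false_eq_true] <;> ring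
    have hb2 : (uarg η s₂ (z n) (ε n) + uarg η s₂ (z (cyc n)) (ε (cyc n)))/2
        = ((if ε n then z n else -z n) + (if ε (cyc n) then z (cyc n) else -z (cyc n)))
            + ((n2ℓ : ℂ)+2)*η := by
      rw [hs₂]
      cases hε : ε n <;> cases hε' : ε (cyc n) <;> simp only [uarg, if_true, if_false,
        Bool.false_eq_true] <;> ring
    have hze : zε n = z n + sgB (ε n) * η := by
      rw [hzε]
      cases hε : ε n <;> simp [sgB, hε]
    have hze' : zε (cyc n) = z (cyc n) + sgB (ε (cyc n)) * η := by
      rw [hzε]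
      cases hε : ε (cyc n) <;> simp [sgB, hε]
    rw [ha1, hb1, ha2, hb2, hze, hze']
    have h := link τ η n2ℓ (z n) (z (cyc n)) (ε n) (ε (cyc n))
    linear_combination (2 * jTheta 1 (lam + ((if ε n then z n else -z n)
      - (if ε (cyc n) then z (cyc n) else -z (cyc n))) + lam) τ) * h
  linear_combination (W * f zε) * key
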